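/- Let u be a real Lie algebra and g = ℂ ⊗_ℝ u its complexification, regarded as a real Lie algebra. Let g ⋉ g denote the semidirect sum of g acting on itself by the adjoint action, i.e. the bracket on g ⊕ g given by [ζ⊕ξ, ζ'⊕ξ'] = ([ζ,ζ'] + [ξ,ζ'] − [ξ',ζ]) ⊕ [ξ,ξ']. Then the map φ : g → g ⋉ g defined by φ(ξ₁ + iξ₂) = (2iξ₂) ⊕ (ξ₁ − iξ₂) for ξ₁, ξ₂ ∈ u is an injective homomorphism of real Lie algebras. -/

import Mathlib

open scoped TensorProduct

/-- The semidirect sum bracket `[ζ⊕ξ, ζ'⊕ξ'] = ([ζ,ζ'] + [ξ,ζ'] − [ξ',ζ]) ⊕ [ξ,ξ']`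
on `g ⊕ g` (the second copy acting on the first by the adjoint action). -/
def sdSumBracket {g : Type*} [LieRing g] (p q : g × g) : g × g :=
  (⁅p.1, q.1⁆ + ⁅p.2, q.1⁆ - ⁅q.2, p.1⁆, ⁅p.2, q.2⁆)

section Aux
variable {u : Type*} [LieRing u] [LieAlgebra ℝ u]

/-- Complex conjugation on the first factor of `ℂ ⊗[ℝ] u`, as an `ℝ`-linear map. -/
noncomputable def sigmaMap : (ℂ ⊗[ℝ] u) →ₗ[ℝ] (ℂ ⊗[ℝ] u) :=
  TensorProduct.map Complex.conjAe.toLinearMap LinearMap.id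

lemma sigma_tmul (c : ℂ) (ξ : u) :
    sigmaMap (c ⊗ₜ[ℝ] ξ) = (starRingEnd ℂ c) ⊗ₜ[ℝ] ξ := rfl

lemma czu_lie_zero (x : ℂ ⊗[ℝ] u) : ⁅x, (0 : ℂ ⊗[ℝ] u)⁆ = 0 := lie_zero x
lemma czu_zero_lie (x : ℂ ⊗[ℝ] u) : ⁅(0 : ℂ ⊗[ℝ] u), x⁆ = 0 := zero_lie x
lemma czu_lie_add (x y z : ℂ ⊗[ℝ] u) : ⁅x, y + z⁆ = ⁅x, y⁆ + ⁅x, z⁆ := lie_add x y z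
lemma czu_add_lie (x y z : ℂ ⊗[ℝ] u) : ⁅x + y, z⁆ = ⁅x, z⁆ + ⁅y, z⁆ := add_lie x y z
lemma czu_lie_sub (x y z : ℂ ⊗[ℝ] u) : ⁅x, y - z⁆ = ⁅x, y⁆ - ⁅x, z⁆ := lie_sub x y z
lemma czu_sub_lie (x y z : ℂ ⊗[ℝ] u) : ⁅x - y, z⁆ = ⁅x, z⁆ - ⁅y, z⁆ := sub_lie x y z
lemma czu_lie_skew (x y : ℂ ⊗[ℝ] u) : ⁅x, y⁆ = -⁅y, x⁆ := (lie_skew x y).symm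

/-- Conjugation on the first factor is a real Lie algebra automorphism. -/
lemma sigma_lie (x y : ℂ ⊗[ℝ] u) :
    sigmaMap ⁅x, y⁆ = ⁅sigmaMap x, sigmaMap y⁆ := by
  induction x using TensorProduct.induction_on with
  | zero => simp only [czu_zero_lie, map_zero]
  | tmul c ξ =>
    induction y using TensorProduct.induction_on with
    | zero => simp only [czu_lie_zero, map_zero]
    | tmul d η =>
      rw [LieAlgebra.ExtendScalars.bracket_tmul, sigma_tmul, sigma_tmul, sigma_tmul,
        LieAlgebra.ExtendScalars.bracket_tmul, map_mul]
    | add y₁ y₂ h1 h2 => simp only [czu_lie_add, map_add, h1, h2]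
  | add x₁ x₂ h1 h2 => simp only [czu_add_lie, map_add, h1, h2]

end Aux

/-- Let `u` be a real Lie algebra and `g = ℂ ⊗_ℝ u` its complexification, regarded as a
real Lie algebra.  The map `φ : g → g ⋉ g`, `φ(ξ₁ + iξ₂) = (2iξ₂) ⊕ (ξ₁ − iξ₂)`, is an
injective homomorphism of real Lie algebras into the semidirect sum `g ⋉ g`. -/
theorem complexification_embeds_in_semidirect_sum
    {u : Type*} [LieRing u] [LieAlgebra ℝ u]
    (φ : (ℂ ⊗[ℝ] u) →ₗ[ℝ] (ℂ ⊗[ℝ] u) × (ℂ ⊗[ℝ] u))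
    (hφ : ∀ ξ₁ ξ₂ : u,
      φ ((1 : ℂ) ⊗ₜ[ℝ] ξ₁ + Complex.I ⊗ₜ[ℝ] ξ₂) =
        ((2 : ℝ) • (Complex.I ⊗ₜ[ℝ] ξ₂),
          (1 : ℂ) ⊗ₜ[ℝ] ξ₁ - Complex.I ⊗ₜ[ℝ] ξ₂)) :
    Function.Injective φ ∧
      ∀ x y : ℂ ⊗[ℝ] u, φ ⁅x, y⁆ = sdSumBracket (φ x) (φ y) := by
  have hdecomp : ∀ (c : ℂ) (ξ : u),
      c ⊗ₜ[ℝ] ξ = (1 : ℂ) ⊗ₜ[ℝ] (c.re • ξ) + Complex.I ⊗ₜ[ℝ] (c.im • ξ) := by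
    intro c ξ
    rw [TensorProduct.tmul_smul, TensorProduct.tmul_smul, TensorProduct.smul_tmul',
      TensorProduct.smul_tmul', ← TensorProduct.add_tmul]
    congr 1
    simp [Complex.real_smul, Complex.re_add_im]
  have hφ' : ∀ x : ℂ ⊗[ℝ] u, φ x = (x - sigmaMap x, sigmaMap x) := by
    have key : φ = (LinearMap.id - sigmaMap).prod sigmaMap := by
      apply TensorProduct.ext'
      intro c ξ
      rw [hdecomp c ξ, hφ]
      simp only [LinearMap.prod_apply, LinearMap.sub_apply, LinearMap.id_apply, map_add,
        sigma_tmul, map_one, Complex.conj_I, Function.prod, TensorProduct.neg_tmul,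
        Prod.mk_add_mk, Prod.mk.injEq, sub_neg_eq_add]
      refine ⟨?_, by abel⟩
      rw [two_smul]
      abel
    intro x
    rw [key]
    rfl
  constructor
  · intro x y hxy
    rw [hφ' x, hφ' y, Prod.mk.injEq] at hxy
    have h2 := hxy.2
    have h1 := hxy.1
    rw [h2] at h1
    exact sub_left_injective h1
  · intro x y
    rw [hφ' x, hφ' y, hφ' ⁅x, y⁆, sigma_lie]
    unfold sdSumBracket
    refine Prod.ext ?_ rfl
    simp only [czu_lie_sub, czu_sub_lie]
    rw [czu_lie_skew (sigmaMap y) x, czu_lie_skew (sigmaMap y) (sigmaMap x)]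
    abel
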